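/- Let S = {(a,0) : a ≥ 1} ∪ {(0,a) : a ≥ 1} ∪ {(a,a) : a ≥ 1} be the set of queen steps. Work in the ring ℚ[ρ,ω] of polynomials in two variables, and for n ≥ 0 let p^w_n = Σ_π ρ^{r(π)} ω^{b(π)}, where the sum is over all Catalan S-paths π from (0,0) to (n,n), r(π) is the number of rook steps of π (steps of the form (a,0) or (0,a)) and b(π) is the number of bishop steps of π (steps of the form (a,a)). Let P^w(t) = Σ_{n≥0} p^w_n tⁿ ∈ (ℚ[ρ,ω])⟦t⟧. Then P^w satisfies the quadratic equation t·(ρ + 1 − (ρ + ω + 1)t)²·(P^w)² − (1−t)·(1 − (ω − 2ρ)t − (ω + 2ρ + 1)t²)·P^w + (1−t)² = 0 in (ℚ[ρ,ω])⟦t⟧. -/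

import Mathlib

/-- x-coordinate of the `j`-th node of the path `p` (partial sum of first coordinates). -/
def xPart (p : List (ℕ × ℕ)) (j : ℕ) : ℕ := ((p.take j).map Prod.fst).sum

/-- y-coordinate of the `j`-th node of the path `p` (partial sum of second coordinates). -/
def yPart (p : List (ℕ × ℕ)) (j : ℕ) : ℕ := ((p.take j).map Prod.snd).sum

/-- `p` is an `S`-path from `(0,0)` to `(n,m)`. -/
def IsPath (S : Set (ℕ × ℕ)) (n m : ℕ) (p : List (ℕ × ℕ)) : Prop :=
  (∀ st ∈ p, st ∈ S) ∧ xPart p p.length = n ∧ yPart p p.length = m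

/-- `p` is Catalan: every node `(x, y)` satisfies `x ≤ y`. -/
def IsCatalan (p : List (ℕ × ℕ)) : Prop :=
  ∀ j ≤ p.length, xPart p j ≤ yPart p j

/-- The number of `S`-paths from `(0,0)` to `(n,m)`. -/
noncomputable def aCount (S : Set (ℕ × ℕ)) (n m : ℕ) : ℕ :=
  Set.ncard {p : List (ℕ × ℕ) | IsPath S n m p}

/-- The number of Catalan `S`-paths from `(0,0)` to `(n,n)`. -/
noncomputable def pCatalan (S : Set (ℕ × ℕ)) (n : ℕ) : ℕ :=
  Set.ncard {p : List (ℕ × ℕ) | IsPath S n n p ∧ IsCatalan p}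

/-- The set of queen steps: proper horizontal, vertical and diagonal steps. -/
def queenSteps : Set (ℕ × ℕ) :=
  {st | (∃ a : ℕ, 1 ≤ a ∧ st = (a, 0)) ∨ (∃ a : ℕ, 1 ≤ a ∧ st = (0, a)) ∨
        (∃ a : ℕ, 1 ≤ a ∧ st = (a, a))}

/-- Enumerator of Catalan queen paths to `(n,n)` by numbers of rook and bishop
steps: `Σ_π ρ^{r(π)} ω^{b(π)}` in `ℚ[ρ,ω]`, where `ρ = X 0`, `ω = X 1`. -/
noncomputable def pQueenW (n : ℕ) : MvPolynomial (Fin 2) ℚ :=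
  ∑ᶠ p ∈ {p : List (ℕ × ℕ) | IsPath queenSteps n n p ∧ IsCatalan p},
    (MvPolynomial.X 0 : MvPolynomial (Fin 2) ℚ) ^
        (p.countP fun st => st.1 == 0 || st.2 == 0) *
    (MvPolynomial.X 1 : MvPolynomial (Fin 2) ℚ) ^
        (p.countP fun st => st.1 == st.2)

/-- The variable `ρ` (weight of a rook step), as a constant power series. -/
noncomputable def ρq : PowerSeries (MvPolynomial (Fin 2) ℚ) :=
  PowerSeries.C (MvPolynomial.X 0)

/-- The variable `ω` (weight of a bishop step), as a constant power series. -/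
noncomputable def ωq : PowerSeries (MvPolynomial (Fin 2) ℚ) :=
  PowerSeries.C (MvPolynomial.X 1)

/-! ### Auxiliary development -/

namespace QueenAux

abbrev R2 := MvPolynomial (Fin 2) ℚ

noncomputable def ρp : R2 := MvPolynomial.X 0
noncomputable def ωp : R2 := MvPolynomial.X 1

/-- weight of a path -/
noncomputable def wt (p : List (ℕ × ℕ)) : R2 :=
  ρp ^ (p.countP fun st => st.1 == 0 || st.2 == 0) * ωp ^ (p.countP fun st => st.1 == st.2)

/-- Catalan prefix paths with `y`-endpoint `n` and height (y−x) `u`. -/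
def PathSet (n u : ℕ) : Set (List (ℕ × ℕ)) :=
  {p | (∀ st ∈ p, st ∈ queenSteps) ∧ IsCatalan p ∧
      yPart p p.length = n ∧ xPart p p.length + u = n}

lemma sum_map_add (p : List (ℕ × ℕ)) (f g : ℕ × ℕ → ℕ) :
    (p.map fun st => f st + g st).sum = (p.map f).sum + (p.map g).sum := by
  induction p with
  | nil => simp
  | cons h t ih => simp [ih]; omega

lemma finite_lists {α : Type*} (s : Set α) (hs : s.Finite) (m : ℕ) :
    {l : List α | l.length ≤ m ∧ ∀ x ∈ l, x ∈ s}.Finite := by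
  induction m with
  | zero =>
    refine Set.Finite.subset (Set.finite_singleton []) ?_
    rintro l ⟨hl, -⟩
    simp [List.length_eq_zero_iff.mp (Nat.le_zero.mp hl)]
  | succ m ih =>
    refine Set.Finite.subset (Set.Finite.insert []
      (((hs.prod ih).image fun q : α × List α => q.1 :: q.2))) ?_
    rintro l ⟨hl, hmem⟩
    cases l with
    | nil => exact Set.mem_insert _ _
    | cons x t =>
      refine Set.mem_insert_of_mem _ ⟨(x, t), ⟨hmem x (by simp), ?_, ?_⟩, rfl⟩
      · simpa using hl
      · exact fun y hy => hmem y (by simp [hy])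

lemma xPart_eq (p : List (ℕ × ℕ)) : xPart p p.length = (p.map Prod.fst).sum := by
  simp [xPart]

lemma yPart_eq (p : List (ℕ × ℕ)) : yPart p p.length = (p.map Prod.snd).sum := by
  simp [yPart]

lemma step_pos {st : ℕ × ℕ} (h : st ∈ queenSteps) : 1 ≤ st.1 + st.2 := by
  rcases h with ⟨a, ha, rfl⟩ | ⟨a, ha, rfl⟩ | ⟨a, ha, rfl⟩ <;> simp <;> omega

lemma finite_pathSet (n u : ℕ) : (PathSet n u).Finite := by
  refine Set.Finite.subset (finite_lists
    (↑(Finset.range (n+1) ×ˢ Finset.range (n+1))) (Finset.finite_toSet _) (2*n)) ?_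
  rintro p ⟨hmem, _, hy, hx⟩
  rw [xPart_eq] at hx; rw [yPart_eq] at hy
  constructor
  · have h1 : p.length = (p.map fun _ => 1).sum := by simp
    have h2 : (p.map fun _ => 1).sum ≤ (p.map fun st => st.1 + st.2).sum :=
      List.sum_le_sum fun st hst => step_pos (hmem st hst)
    rw [sum_map_add] at h2
    omega
  · intro st hst
    have hx1 : st.1 ≤ (p.map Prod.fst).sum := List.le_sum_of_mem (List.mem_map_of_mem hst)
    have hy1 : st.2 ≤ (p.map Prod.snd).sum := List.le_sum_of_mem (List.mem_map_of_mem hst)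
    simp only [Finset.coe_product, Set.mem_prod, Finset.mem_coe, Finset.mem_range]
    omega

/-- the weighted count -/
noncomputable def f (n u : ℕ) : R2 := ∑ᶠ p ∈ PathSet n u, wt p

lemma f_eq (n u : ℕ) :
    f n u = ∑ p ∈ (finite_pathSet n u).toFinset, wt p := by
  rw [f, ← finsum_mem_coe_finset, (finite_pathSet n u).coe_toFinset]


lemma f_zero {n u : ℕ} (h : n < u) : f n u = 0 := by
  have : PathSet n u = ∅ := by
    ext p; simp only [PathSet, Set.mem_setOf_eq, Set.mem_empty_iff_false, iff_false]
    rintro ⟨-, -, -, hx⟩; omega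
  rw [f, this]; exact finsum_mem_empty

lemma pathSet_zero : PathSet 0 0 = {[]} := by
  ext p
  simp only [PathSet, Set.mem_setOf_eq, Set.mem_singleton_iff]
  constructor
  · rintro ⟨hmem, -, hy, hx⟩
    cases p with
    | nil => rfl
    | cons st t =>
      exfalso
      rw [xPart_eq] at hx; rw [yPart_eq] at hy
      have h1 := step_pos (hmem st (by simp))
      simp only [List.map_cons, List.sum_cons] at hx hy
      omega
  · rintro rfl
    refine ⟨by simp, ?_, by simp [yPart], by simp [xPart]⟩
    intro j hj; simp at hj; simp [hj, xPart, yPart]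

lemma wt_nil : wt [] = 1 := by simp [wt]

lemma f_zero_zero : f 0 0 = 1 := by
  rw [f, pathSet_zero, finsum_mem_singleton, wt_nil]

lemma pQueenW_eq_f (n : ℕ) : pQueenW n = f n 0 := by
  rw [pQueenW, f]
  have hset : {p : List (ℕ × ℕ) | IsPath queenSteps n n p ∧ IsCatalan p} = PathSet n 0 := by
    ext p
    simp only [Set.mem_setOf_eq, IsPath, PathSet]
    constructor
    · rintro ⟨⟨hm, hx, hy⟩, hc⟩; exact ⟨hm, hc, hy, by omega⟩
    · rintro ⟨hm, hc, hy, hx⟩; exact ⟨⟨hm, by omega, hy⟩, hc⟩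
  rw [hset]; rfl

/-! ### append lemmas -/

lemma xPart_append_le (q : List (ℕ × ℕ)) (st : ℕ × ℕ) {j : ℕ} (hj : j ≤ q.length) :
    xPart (q ++ [st]) j = xPart q j := by
  simp [xPart, List.take_append_of_le_length hj]

lemma yPart_append_le (q : List (ℕ × ℕ)) (st : ℕ × ℕ) {j : ℕ} (hj : j ≤ q.length) :
    yPart (q ++ [st]) j = yPart q j := by
  simp [yPart, List.take_append_of_le_length hj]

lemma xPart_append_top (q : List (ℕ × ℕ)) (st : ℕ × ℕ) :
    xPart (q ++ [st]) (q.length + 1) = xPart q q.length + st.1 := by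
  have h : (q ++ [st]).take (q.length + 1) = q ++ [st] :=
    List.take_of_length_le (by simp)
  rw [xPart, h, xPart]
  simp

lemma yPart_append_top (q : List (ℕ × ℕ)) (st : ℕ × ℕ) :
    yPart (q ++ [st]) (q.length + 1) = yPart q q.length + st.2 := by
  have h : (q ++ [st]).take (q.length + 1) = q ++ [st] :=
    List.take_of_length_le (by simp)
  rw [yPart, h, yPart]
  simp

lemma isCatalan_append (q : List (ℕ × ℕ)) (st : ℕ × ℕ) :
    IsCatalan (q ++ [st]) ↔
      IsCatalan q ∧ xPart q q.length + st.1 ≤ yPart q q.length + st.2 := by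
  constructor
  · intro h
    refine ⟨fun j hj => ?_, ?_⟩
    · have := h j (by simp; omega)
      rwa [xPart_append_le q st hj, yPart_append_le q st hj] at this
    · have := h (q.length + 1) (by simp)
      rwa [xPart_append_top, yPart_append_top] at this
  · rintro ⟨h1, h2⟩ j hj
    simp only [List.length_append, List.length_singleton] at hj
    rcases Nat.lt_or_ge j (q.length + 1) with hlt | hge
    · have hj' : j ≤ q.length := by omega
      rw [xPart_append_le q st hj', yPart_append_le q st hj']
      exact h1 j hj'
    · have hj' : j = q.length + 1 := by omega
      subst hj'
      rw [xPart_append_top, yPart_append_top]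
      exact h2

lemma wt_append (q : List (ℕ × ℕ)) (st : ℕ × ℕ) :
    wt (q ++ [st]) = wt q * wt [st] := by
  simp only [wt, List.countP_append, pow_add]
  ring

lemma wt_single_V {a : ℕ} (ha : 1 ≤ a) : wt [(0, a)] = ρp := by
  have h1 : ((0 : ℕ) == a) = false := by simp; omega
  simp [wt, List.countP_cons, h1]

lemma wt_single_H {a : ℕ} (ha : 1 ≤ a) : wt [(a, 0)] = ρp := by
  have h1 : ((a : ℕ) == 0) = false := by simp; omega
  simp [wt, List.countP_cons, h1]

lemma wt_single_D {a : ℕ} (ha : 1 ≤ a) : wt [(a, a)] = ωp := by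
  have h1 : ((a : ℕ) == 0) = false := by simp; omega
  simp [wt, List.countP_cons, h1]

lemma append_mem_pathSet_iff {n u : ℕ} {q : List (ℕ × ℕ)} {st : ℕ × ℕ}
    (hst : st ∈ queenSteps) :
    q ++ [st] ∈ PathSet n u ↔
      (∀ x ∈ q, x ∈ queenSteps) ∧ IsCatalan q ∧
        yPart q q.length + st.2 = n ∧ xPart q q.length + st.1 + u = n := by
  have hlen : (q ++ [st]).length = q.length + 1 := by simp
  constructor
  · rintro ⟨hmem, hcat, hy, hx⟩
    rw [hlen, yPart_append_top] at hy
    rw [hlen, xPart_append_top] at hx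
    rw [isCatalan_append] at hcat
    exact ⟨fun x hx' => hmem x (by simp [hx']), hcat.1, hy, by omega⟩
  · rintro ⟨hmem, hcat, hy, hx⟩
    refine ⟨?_, ?_, ?_, ?_⟩
    · intro x hx'
      rcases List.mem_append.mp hx' with h | h
      · exact hmem x h
      · simp at h; subst h; exact hst
    · rw [isCatalan_append]; exact ⟨hcat, by omega⟩
    · rw [hlen, yPart_append_top]; exact hy
    · rw [hlen, xPart_append_top]; omega


lemma decomp {p : List (ℕ × ℕ)} (h : p ≠ []) : p.dropLast ++ [p.getLastD (0, 0)] = p := by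
  have h1 : p.getLastD (0, 0) = p.getLast h := by
    rw [List.getLastD_eq_getLast?, List.getLast?_eq_getLast h]; rfl
  rw [h1, List.dropLast_append_getLast]

lemma sum_V (n u : ℕ) (hu : u ≤ n) :
    ∑ p ∈ (finite_pathSet n u).toFinset.filter
        (fun p => ¬p = [] ∧ (p.getLastD (0, 0)).1 = 0), wt p
      = ∑ a ∈ Finset.Icc 1 u, ρp * f (n - a) (u - a) := by
  classical
  have hrw : ∀ a ∈ Finset.Icc 1 u, ρp * f (n - a) (u - a)
      = ∑ q ∈ (finite_pathSet (n - a) (u - a)).toFinset, wt q * ρp := by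
    intro a _
    rw [f_eq, Finset.mul_sum]
    exact Finset.sum_congr rfl fun q _ => mul_comm _ _
  rw [Finset.sum_congr rfl hrw, ← Finset.sum_sigma (Finset.Icc 1 u)
    (fun a => (finite_pathSet (n - a) (u - a)).toFinset) (fun x => wt x.2 * ρp)]
  refine Finset.sum_bij' (i := fun p _ => ⟨(p.getLastD (0, 0)).2, p.dropLast⟩)
    (j := fun x _ => x.2 ++ [(0, x.1)]) ?_ ?_ ?_ ?_ ?_
  · -- i maps into sigma
    intro p hp
    rw [Finset.mem_filter] at hp
    obtain ⟨hps, hne, hV⟩ := hp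
    rw [Set.Finite.mem_toFinset] at hps
    have hde := decomp hne
    have hstmem : p.getLastD (0, 0) ∈ queenSteps := hps.1 _ (by rw [← hde]; simp)
    obtain ⟨a, ha, hsteq⟩ : ∃ a, 1 ≤ a ∧ p.getLastD (0, 0) = (0, a) := by
      rcases hstmem with ⟨a, ha, h⟩ | ⟨a, ha, h⟩ | ⟨a, ha, h⟩
      · exfalso; rw [h] at hV; simp at hV; omega
      · exact ⟨a, ha, h⟩
      · exfalso; rw [h] at hV; simp at hV; omega
    have hq : p.dropLast ++ [(0, a)] ∈ PathSet n u := by rw [← hsteq, hde]; exact hps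
    rw [append_mem_pathSet_iff (Or.inr (Or.inl ⟨a, ha, rfl⟩))] at hq
    obtain ⟨hmem, hcat, hy, hx⟩ := hq
    simp only at hy hx
    have hxy := hcat p.dropLast.length le_rfl
    rw [Finset.mem_sigma]
    simp only [hsteq]
    refine ⟨Finset.mem_Icc.mpr ⟨ha, by omega⟩, ?_⟩
    rw [Set.Finite.mem_toFinset]
    exact ⟨hmem, hcat, by omega, by omega⟩
  · -- j maps into filter
    rintro ⟨a, q⟩ hx
    rw [Finset.mem_sigma] at hx
    have ha1 : 1 ≤ a := (Finset.mem_Icc.mp hx.1).1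
    have hau : a ≤ u := (Finset.mem_Icc.mp hx.1).2
    have hq2 : q ∈ PathSet (n - a) (u - a) := (Set.Finite.mem_toFinset _).mp hx.2
    obtain ⟨hmem, hcat, hy, hxx⟩ := hq2
    show q ++ [(0, a)] ∈ (finite_pathSet n u).toFinset.filter
        (fun p => ¬p = [] ∧ (p.getLastD (0, 0)).1 = 0)
    rw [Finset.mem_filter, Set.Finite.mem_toFinset]
    refine ⟨?_, by simp, by simp⟩
    rw [append_mem_pathSet_iff (Or.inr (Or.inl ⟨a, ha1, rfl⟩))]
    refine ⟨hmem, hcat, ?_, ?_⟩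
    · show yPart q q.length + a = n
      omega
    · show xPart q q.length + 0 + u = n
      omega
  · -- left inverse
    intro p hp
    rw [Finset.mem_filter] at hp
    obtain ⟨-, hne, hV⟩ := hp
    have hde := decomp hne
    have h0 : (0, (p.getLastD (0, 0)).2) = p.getLastD (0, 0) := by
      conv_rhs => rw [← Prod.mk.eta (p := p.getLastD (0, 0))]
      rw [hV]
    show p.dropLast ++ [(0, (p.getLastD (0, 0)).2)] = p
    rw [h0, hde]
  · -- right inverse
    rintro ⟨a, q⟩ _
    show (⟨((q ++ [(0, a)]).getLastD (0, 0)).2, (q ++ [(0, a)]).dropLast⟩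
        : Σ _ : ℕ, List (ℕ × ℕ)) = ⟨a, q⟩
    rw [List.getLastD_concat, List.dropLast_concat]
  · -- weights
    intro p hp
    rw [Finset.mem_filter] at hp
    obtain ⟨hps, hne, hV⟩ := hp
    rw [Set.Finite.mem_toFinset] at hps
    have hde := decomp hne
    have hstmem : p.getLastD (0, 0) ∈ queenSteps := hps.1 _ (by rw [← hde]; simp)
    obtain ⟨a, ha, hsteq⟩ : ∃ a, 1 ≤ a ∧ p.getLastD (0, 0) = (0, a) := by
      rcases hstmem with ⟨a, ha, h⟩ | ⟨a, ha, h⟩ | ⟨a, ha, h⟩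
      · exfalso; rw [h] at hV; simp at hV; omega
      · exact ⟨a, ha, h⟩
      · exfalso; rw [h] at hV; simp at hV; omega
    show wt p = wt p.dropLast * ρp
    conv_lhs => rw [← hde, hsteq]
    rw [wt_append, wt_single_V ha]

lemma sum_H (n u : ℕ) (hu : u ≤ n) :
    ∑ p ∈ (finite_pathSet n u).toFinset.filter
        (fun p => ¬p = [] ∧ ¬(p.getLastD (0, 0)).1 = 0 ∧ (p.getLastD (0, 0)).2 = 0), wt p
      = ∑ a ∈ Finset.Icc 1 (n - u), ρp * f n (u + a) := by
  classical
  have hrw : ∀ a ∈ Finset.Icc 1 (n - u), ρp * f n (u + a)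
      = ∑ q ∈ (finite_pathSet n (u + a)).toFinset, wt q * ρp := by
    intro a _
    rw [f_eq, Finset.mul_sum]
    exact Finset.sum_congr rfl fun q _ => mul_comm _ _
  rw [Finset.sum_congr rfl hrw, ← Finset.sum_sigma (Finset.Icc 1 (n - u))
    (fun a => (finite_pathSet n (u + a)).toFinset) (fun x => wt x.2 * ρp)]
  refine Finset.sum_bij' (i := fun p _ => ⟨(p.getLastD (0, 0)).1, p.dropLast⟩)
    (j := fun x _ => x.2 ++ [(x.1, 0)]) ?_ ?_ ?_ ?_ ?_
  · intro p hp
    rw [Finset.mem_filter] at hp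
    obtain ⟨hps, hne, hV, hH⟩ := hp
    rw [Set.Finite.mem_toFinset] at hps
    have hde := decomp hne
    have hstmem : p.getLastD (0, 0) ∈ queenSteps := hps.1 _ (by rw [← hde]; simp)
    obtain ⟨a, ha, hsteq⟩ : ∃ a, 1 ≤ a ∧ p.getLastD (0, 0) = (a, 0) := by
      rcases hstmem with ⟨a, ha, h⟩ | ⟨a, ha, h⟩ | ⟨a, ha, h⟩
      · exact ⟨a, ha, h⟩
      · exfalso; rw [h] at hV; simp at hV
      · exfalso; rw [h] at hH hV; simp at hH hV; omega
    have hq : p.dropLast ++ [(a, 0)] ∈ PathSet n u := by rw [← hsteq, hde]; exact hps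
    rw [append_mem_pathSet_iff (Or.inl ⟨a, ha, rfl⟩)] at hq
    obtain ⟨hmem, hcat, hy, hx⟩ := hq
    simp only at hy hx
    rw [Finset.mem_sigma]
    simp only [hsteq]
    refine ⟨Finset.mem_Icc.mpr ⟨ha, by omega⟩, ?_⟩
    rw [Set.Finite.mem_toFinset]
    exact ⟨hmem, hcat, by omega, by omega⟩
  · rintro ⟨a, q⟩ hx
    rw [Finset.mem_sigma] at hx
    have ha1 : 1 ≤ a := (Finset.mem_Icc.mp hx.1).1
    have hau : a ≤ n - u := (Finset.mem_Icc.mp hx.1).2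
    have hq2 : q ∈ PathSet n (u + a) := (Set.Finite.mem_toFinset _).mp hx.2
    obtain ⟨hmem, hcat, hy, hxx⟩ := hq2
    show q ++ [(a, 0)] ∈ (finite_pathSet n u).toFinset.filter
        (fun p => ¬p = [] ∧ ¬(p.getLastD (0, 0)).1 = 0 ∧ (p.getLastD (0, 0)).2 = 0)
    rw [Finset.mem_filter, Set.Finite.mem_toFinset]
    refine ⟨?_, by simp, by simp; omega, by simp⟩
    rw [append_mem_pathSet_iff (Or.inl ⟨a, ha1, rfl⟩)]
    refine ⟨hmem, hcat, ?_, ?_⟩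
    · show yPart q q.length + 0 = n
      omega
    · show xPart q q.length + a + u = n
      omega
  · intro p hp
    rw [Finset.mem_filter] at hp
    obtain ⟨hps, hne, hV, hH⟩ := hp
    have hde := decomp hne
    have h0 : ((p.getLastD (0, 0)).1, 0) = p.getLastD (0, 0) := by
      conv_rhs => rw [← Prod.mk.eta (p := p.getLastD (0, 0))]
      rw [hH]
    show p.dropLast ++ [((p.getLastD (0, 0)).1, 0)] = p
    rw [h0, hde]
  · rintro ⟨a, q⟩ _
    show (⟨((q ++ [(a, 0)]).getLastD (0, 0)).1, (q ++ [(a, 0)]).dropLast⟩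
        : Σ _ : ℕ, List (ℕ × ℕ)) = ⟨a, q⟩
    rw [List.getLastD_concat, List.dropLast_concat]
  · intro p hp
    rw [Finset.mem_filter] at hp
    obtain ⟨hps, hne, hV, hH⟩ := hp
    rw [Set.Finite.mem_toFinset] at hps
    have hde := decomp hne
    have hstmem : p.getLastD (0, 0) ∈ queenSteps := hps.1 _ (by rw [← hde]; simp)
    obtain ⟨a, ha, hsteq⟩ : ∃ a, 1 ≤ a ∧ p.getLastD (0, 0) = (a, 0) := by
      rcases hstmem with ⟨a, ha, h⟩ | ⟨a, ha, h⟩ | ⟨a, ha, h⟩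
      · exact ⟨a, ha, h⟩
      · exfalso; rw [h] at hV; simp at hV
      · exfalso; rw [h] at hH hV; simp at hH hV; omega
    show wt p = wt p.dropLast * ρp
    conv_lhs => rw [← hde, hsteq]
    rw [wt_append, wt_single_H ha]

lemma sum_D (n u : ℕ) (hu : u ≤ n) :
    ∑ p ∈ (finite_pathSet n u).toFinset.filter
        (fun p => ¬p = [] ∧ ¬(p.getLastD (0, 0)).1 = 0 ∧ ¬(p.getLastD (0, 0)).2 = 0), wt p
      = ∑ a ∈ Finset.Icc 1 (n - u), ωp * f (n - a) u := by
  classical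
  have hrw : ∀ a ∈ Finset.Icc 1 (n - u), ωp * f (n - a) u
      = ∑ q ∈ (finite_pathSet (n - a) u).toFinset, wt q * ωp := by
    intro a _
    rw [f_eq, Finset.mul_sum]
    exact Finset.sum_congr rfl fun q _ => mul_comm _ _
  rw [Finset.sum_congr rfl hrw, ← Finset.sum_sigma (Finset.Icc 1 (n - u))
    (fun a => (finite_pathSet (n - a) u).toFinset) (fun x => wt x.2 * ωp)]
  refine Finset.sum_bij' (i := fun p _ => ⟨(p.getLastD (0, 0)).1, p.dropLast⟩)
    (j := fun x _ => x.2 ++ [(x.1, x.1)]) ?_ ?_ ?_ ?_ ?_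
  · intro p hp
    rw [Finset.mem_filter] at hp
    obtain ⟨hps, hne, hV, hH⟩ := hp
    rw [Set.Finite.mem_toFinset] at hps
    have hde := decomp hne
    have hstmem : p.getLastD (0, 0) ∈ queenSteps := hps.1 _ (by rw [← hde]; simp)
    obtain ⟨a, ha, hsteq⟩ : ∃ a, 1 ≤ a ∧ p.getLastD (0, 0) = (a, a) := by
      rcases hstmem with ⟨a, ha, h⟩ | ⟨a, ha, h⟩ | ⟨a, ha, h⟩
      · exfalso; rw [h] at hH; simp at hH
      · exfalso; rw [h] at hV; simp at hV
      · exact ⟨a, ha, h⟩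
    have hq : p.dropLast ++ [(a, a)] ∈ PathSet n u := by rw [← hsteq, hde]; exact hps
    rw [append_mem_pathSet_iff (Or.inr (Or.inr ⟨a, ha, rfl⟩))] at hq
    obtain ⟨hmem, hcat, hy, hx⟩ := hq
    simp only at hy hx
    rw [Finset.mem_sigma]
    simp only [hsteq]
    refine ⟨Finset.mem_Icc.mpr ⟨ha, by omega⟩, ?_⟩
    rw [Set.Finite.mem_toFinset]
    exact ⟨hmem, hcat, by omega, by omega⟩
  · rintro ⟨a, q⟩ hx
    rw [Finset.mem_sigma] at hx
    have ha1 : 1 ≤ a := (Finset.mem_Icc.mp hx.1).1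
    have hau : a ≤ n - u := (Finset.mem_Icc.mp hx.1).2
    have hq2 : q ∈ PathSet (n - a) u := (Set.Finite.mem_toFinset _).mp hx.2
    obtain ⟨hmem, hcat, hy, hxx⟩ := hq2
    show q ++ [(a, a)] ∈ (finite_pathSet n u).toFinset.filter
        (fun p => ¬p = [] ∧ ¬(p.getLastD (0, 0)).1 = 0 ∧ ¬(p.getLastD (0, 0)).2 = 0)
    rw [Finset.mem_filter, Set.Finite.mem_toFinset]
    refine ⟨?_, by simp, by simp; omega, by simp; omega⟩
    rw [append_mem_pathSet_iff (Or.inr (Or.inr ⟨a, ha1, rfl⟩))]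
    refine ⟨hmem, hcat, ?_, ?_⟩
    · show yPart q q.length + a = n
      omega
    · show xPart q q.length + a + u = n
      omega
  · intro p hp
    rw [Finset.mem_filter] at hp
    obtain ⟨hps, hne, hV, hH⟩ := hp
    rw [Set.Finite.mem_toFinset] at hps
    have hde := decomp hne
    have hstmem : p.getLastD (0, 0) ∈ queenSteps := hps.1 _ (by rw [← hde]; simp)
    obtain ⟨a, ha, hsteq⟩ : ∃ a, 1 ≤ a ∧ p.getLastD (0, 0) = (a, a) := by
      rcases hstmem with ⟨a, ha, h⟩ | ⟨a, ha, h⟩ | ⟨a, ha, h⟩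
      · exfalso; rw [h] at hH; simp at hH
      · exfalso; rw [h] at hV; simp at hV
      · exact ⟨a, ha, h⟩
    have h0 : ((p.getLastD (0, 0)).1, (p.getLastD (0, 0)).1) = p.getLastD (0, 0) := by
      rw [hsteq]
    show p.dropLast ++ [((p.getLastD (0, 0)).1, (p.getLastD (0, 0)).1)] = p
    rw [h0, hde]
  · rintro ⟨a, q⟩ _
    show (⟨((q ++ [(a, a)]).getLastD (0, 0)).1, (q ++ [(a, a)]).dropLast⟩
        : Σ _ : ℕ, List (ℕ × ℕ)) = ⟨a, q⟩
    rw [List.getLastD_concat, List.dropLast_concat]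
  · intro p hp
    rw [Finset.mem_filter] at hp
    obtain ⟨hps, hne, hV, hH⟩ := hp
    rw [Set.Finite.mem_toFinset] at hps
    have hde := decomp hne
    have hstmem : p.getLastD (0, 0) ∈ queenSteps := hps.1 _ (by rw [← hde]; simp)
    obtain ⟨a, ha, hsteq⟩ : ∃ a, 1 ≤ a ∧ p.getLastD (0, 0) = (a, a) := by
      rcases hstmem with ⟨a, ha, h⟩ | ⟨a, ha, h⟩ | ⟨a, ha, h⟩
      · exfalso; rw [h] at hH; simp at hH
      · exfalso; rw [h] at hV; simp at hV
      · exact ⟨a, ha, h⟩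
    show wt p = wt p.dropLast * ωp
    conv_lhs => rw [← hde, hsteq]
    rw [wt_append, wt_single_D ha]

lemma empty_mem_pathSet {n u : ℕ} (h : [] ∈ PathSet n u) : n = 0 ∧ u = 0 := by
  obtain ⟨-, -, hy, hx⟩ := h
  simp [yPart] at hy
  simp [xPart] at hx
  omega

lemma f_rec (n u : ℕ) (hu : u ≤ n) :
    f n u = (if n = 0 ∧ u = 0 then 1 else 0)
      + ∑ a ∈ Finset.Icc 1 u, ρp * f (n - a) (u - a)
      + ∑ a ∈ Finset.Icc 1 (n - u), ρp * f n (u + a)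
      + ∑ a ∈ Finset.Icc 1 (n - u), ωp * f (n - a) u := by
  classical
  have T0 : ∑ p ∈ (finite_pathSet n u).toFinset.filter (fun p => p = []), wt p
      = (if n = 0 ∧ u = 0 then 1 else 0) := by
    by_cases h : n = 0 ∧ u = 0
    · obtain ⟨rfl, rfl⟩ := h
      have he : (finite_pathSet 0 0).toFinset.filter (fun p => p = []) = {[]} := by
        ext p
        simp only [Finset.mem_filter, Set.Finite.mem_toFinset, pathSet_zero,
          Set.mem_singleton_iff, Finset.mem_singleton]
        tauto
      rw [he, Finset.sum_singleton, wt_nil]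
      simp
    · have he : (finite_pathSet n u).toFinset.filter (fun p => p = []) = ∅ := by
        ext p
        simp only [Finset.mem_filter, Set.Finite.mem_toFinset, Finset.notMem_empty,
          iff_false, not_and]
        rintro hp rfl
        exact h (empty_mem_pathSet hp)
      rw [he, Finset.sum_empty, if_neg h]
  rw [f_eq,
    ← Finset.sum_filter_add_sum_filter_not ((finite_pathSet n u).toFinset)
      (fun p => p = []) wt,
    ← Finset.sum_filter_add_sum_filter_not
      (((finite_pathSet n u).toFinset).filter (fun p => ¬p = []))
      (fun p => (p.getLastD (0, 0)).1 = 0) wt,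
    ← Finset.sum_filter_add_sum_filter_not
      ((((finite_pathSet n u).toFinset).filter (fun p => ¬p = [])).filter
        (fun p => ¬(p.getLastD (0, 0)).1 = 0))
      (fun p => (p.getLastD (0, 0)).2 = 0) wt,
    Finset.filter_filter, Finset.filter_filter, Finset.filter_filter, Finset.filter_filter,
    Finset.filter_filter,
    T0, sum_V n u hu, sum_H n u hu, sum_D n u hu]
  ring

/-! ### Power series -/

abbrev PSR := PowerSeries R2

noncomputable def Xs : PSR := PowerSeries.X
noncomputable def Cr : PSR := PowerSeries.C ρp
noncomputable def Cw : PSR := PowerSeries.C ωp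

noncomputable def cf (n : ℕ) (φ : PSR) : R2 := PowerSeries.coeff n φ

noncomputable def Fu (u : ℕ) : PSR := PowerSeries.mk fun n => f n u
noncomputable def F1s : PSR := PowerSeries.mk fun n => ∑ v ∈ Finset.range (n + 1), f n v
noncomputable def Ts (u : ℕ) : PSR := PowerSeries.mk fun n => ∑ v ∈ Finset.Icc (u + 1) n, f n v
noncomputable def As (u : ℕ) : PSR :=
  ∑ i ∈ Finset.range u, (PowerSeries.X : PSR) ^ (i + 1) * Fu (u - 1 - i)
noncomputable def Js : PSR := PowerSeries.mk fun _ => 1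

lemma coeff_Fu_zero {n u : ℕ} (h : n < u) : PowerSeries.coeff n (Fu u) = 0 := by
  simp [Fu, f_zero h]

lemma coeff_Ts_zero {n u : ℕ} (h : n ≤ u) : PowerSeries.coeff n (Ts u) = 0 := by
  simp only [Ts, PowerSeries.coeff_mk]
  rw [Finset.Icc_eq_empty (by omega), Finset.sum_empty]

lemma coeff_As (n u : ℕ) : PowerSeries.coeff n (As u)
    = ∑ i ∈ Finset.range u, if i + 1 ≤ n then f (n - (i + 1)) (u - 1 - i) else 0 := by
  simp [As, PowerSeries.coeff_X_pow_mul', Fu]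

lemma coeff_As_zero {n u : ℕ} (h : n < u) : PowerSeries.coeff n (As u) = 0 := by
  rw [coeff_As]
  refine Finset.sum_eq_zero fun i hi => ?_
  rw [Finset.mem_range] at hi
  split_ifs with hin
  · exact f_zero (by omega)
  · rfl

lemma As_succ (u : ℕ) : As (u + 1) = PowerSeries.X * (Fu u + As u) := by
  rw [As, Finset.sum_range_succ']
  have h2 : ∀ i ∈ Finset.range u,
      (PowerSeries.X : PSR) ^ (i + 1 + 1) * Fu (u + 1 - 1 - (i + 1))
        = PowerSeries.X * ((PowerSeries.X : PSR) ^ (i + 1) * Fu (u - 1 - i)) := by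
    intro i _
    rw [show u + 1 - 1 - (i + 1) = u - 1 - i by omega, pow_succ']
    ring
  rw [Finset.sum_congr rfl h2, ← Finset.mul_sum, ← As]
  simp only [Nat.add_sub_cancel, Nat.sub_zero, pow_one]
  ring

lemma Ts_succ (u : ℕ) : Ts u = Fu (u + 1) + Ts (u + 1) := by
  refine PowerSeries.ext fun n => ?_
  simp only [Ts, Fu, map_add, PowerSeries.coeff_mk]
  by_cases h : u + 1 ≤ n
  · have hins : Finset.Icc (u + 1) n = insert (u + 1) (Finset.Icc (u + 2) n) := by
      ext v; simp [Finset.mem_Icc]; omega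
    rw [hins, Finset.sum_insert (by simp [Finset.mem_Icc])]
  · rw [Finset.Icc_eq_empty (show ¬u + 1 ≤ n by omega),
      Finset.Icc_eq_empty (show ¬u + 2 ≤ n by omega)]
    simp [f_zero (show n < u + 1 by omega)]

lemma F1s_split : F1s = Fu 0 + Ts 0 := by
  ext n
  simp only [F1s, Fu, Ts, map_add, PowerSeries.coeff_mk]
  have hins : Finset.range (n + 1) = insert 0 (Finset.Icc 1 n) := by
    ext v; simp [Finset.mem_Icc, Finset.mem_range]; omega
  rw [hins, Finset.sum_insert (by simp [Finset.mem_Icc])]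

lemma J_inv : (1 - PowerSeries.X) * Js = 1 := by
  ext n
  cases n with
  | zero => simp [Js]
  | succ m =>
    rw [sub_mul, one_mul, map_sub, PowerSeries.coeff_succ_X_mul]
    simp [Js, PowerSeries.coeff_one]

lemma coeff_X_J_mul (φ : PSR) (n : ℕ) :
    PowerSeries.coeff n (PowerSeries.X * (Js * φ))
      = ∑ k ∈ Finset.range n, PowerSeries.coeff k φ := by
  cases n with
  | zero =>
    simp [PowerSeries.coeff_zero_eq_constantCoeff, map_mul]
  | succ m =>
    rw [PowerSeries.coeff_succ_X_mul, PowerSeries.coeff_mul,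
      Finset.Nat.sum_antidiagonal_eq_sum_range_succ_mk]
    simp only [Js, PowerSeries.coeff_mk, one_mul]
    exact Finset.sum_range_reflect (fun k => PowerSeries.coeff k φ) (m + 1)

lemma sum_Icc_one {M : Type*} [AddCommMonoid M] (g : ℕ → M) (m : ℕ) :
    ∑ a ∈ Finset.Icc 1 m, g a = ∑ i ∈ Finset.range m, g (i + 1) := by
  induction m with
  | zero => simp
  | succ m ih =>
    rw [Finset.sum_Icc_succ_top (by omega), ih, Finset.sum_range_succ]

lemma sum_Icc_shift {M : Type*} [AddCommMonoid M] (g : ℕ → M) (u m : ℕ) :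
    ∑ v ∈ Finset.Icc (u + 1) (u + m), g v = ∑ a ∈ Finset.Icc 1 m, g (u + a) := by
  induction m with
  | zero => simp
  | succ m ih =>
    rw [← add_assoc, Finset.sum_Icc_succ_top (by omega),
      Finset.sum_Icc_succ_top (by omega), ih, ← add_assoc]

/-- The series form of the recurrence. -/
lemma SR (u : ℕ) :
    Fu u = (if u = 0 then 1 else 0) + Cr * As u + Cr * Ts u
      + Cw * (PowerSeries.X * (Js * Fu u)) := by
  refine PowerSeries.ext fun n => ?_
  simp only [map_add, Cr, Cw, PowerSeries.coeff_C_mul, coeff_X_J_mul, coeff_As]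
  simp only [Fu, Ts, PowerSeries.coeff_mk]
  have hδ : PowerSeries.coeff n (if u = 0 then (1 : PSR) else 0)
      = (if n = 0 ∧ u = 0 then (1 : R2) else 0) := by
    split_ifs with h1 h2 h2
    · rw [PowerSeries.coeff_one, if_pos h2.1]
    · rw [PowerSeries.coeff_one, if_neg (fun hn => h2 ⟨hn, h1⟩)]
    · exact absurd h2.2 h1
    · simp
  rw [hδ]
  by_cases hu : u ≤ n
  · rw [f_rec n u hu]
    have hA : ∑ a ∈ Finset.Icc 1 u, ρp * f (n - a) (u - a)
        = ρp * ∑ i ∈ Finset.range u,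
            (if i + 1 ≤ n then f (n - (i + 1)) (u - 1 - i) else 0) := by
      rw [← Finset.mul_sum, sum_Icc_one (fun a => f (n - a) (u - a)) u]
      congr 1
      refine Finset.sum_congr rfl fun i hi => ?_
      rw [Finset.mem_range] at hi
      rw [if_pos (by omega), show u - (i + 1) = u - 1 - i by omega]
    have hH : ∑ a ∈ Finset.Icc 1 (n - u), ρp * f n (u + a)
        = ρp * ∑ v ∈ Finset.Icc (u + 1) n, f n v := by
      rw [← Finset.mul_sum]
      congr 1
      have hsh := sum_Icc_shift (fun v => f n v) u (n - u)
      rw [show u + (n - u) = n by omega] at hsh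
      rw [← hsh]
    have hW : ∑ a ∈ Finset.Icc 1 (n - u), ωp * f (n - a) u
        = ωp * ∑ k ∈ Finset.range n, f k u := by
      rw [← Finset.mul_sum]
      congr 1
      rw [Finset.sum_subset (Finset.Icc_subset_Icc_right (by omega : n - u ≤ n))
        (fun a ha hna => f_zero (show n - a < u by
          rw [Finset.mem_Icc] at ha
          simp only [Finset.mem_Icc, not_and, not_le] at hna
          omega))]
      rw [sum_Icc_one (fun a => f (n - a) u) n]
      rw [← Finset.sum_range_reflect (fun k => f k u) n]
      refine Finset.sum_congr rfl fun i hi => ?_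
      rw [Finset.mem_range] at hi
      congr 1
      omega
    rw [hA, hH, hW]
  · push_neg at hu
    rw [f_zero hu]
    have h1 : (if n = 0 ∧ u = 0 then (1 : R2) else 0) = 0 := by
      rw [if_neg (by omega)]
    have h2 : ∑ i ∈ Finset.range u,
        (if i + 1 ≤ n then f (n - (i + 1)) (u - 1 - i) else 0) = 0 := by
      refine Finset.sum_eq_zero fun i hi => ?_
      rw [Finset.mem_range] at hi
      split_ifs with hin
      · exact f_zero (by omega)
      · rfl
    have h3 : ∑ v ∈ Finset.Icc (u + 1) n, f n v = 0 := by
      rw [Finset.Icc_eq_empty (by omega), Finset.sum_empty]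
    have h4 : ∑ k ∈ Finset.range n, f k u = 0 :=
      Finset.sum_eq_zero fun k hk => f_zero (by rw [Finset.mem_range] at hk; omega)
    rw [h1, h2, h3, h4]
    ring

noncomputable def Sg (g : PSR) (N : ℕ) : PSR := ∑ u ∈ Finset.range N, g ^ u * Fu u
noncomputable def SAg (g : PSR) (N : ℕ) : PSR := ∑ u ∈ Finset.range N, g ^ u * As u
noncomputable def STg (g : PSR) (N : ℕ) : PSR := ∑ u ∈ Finset.range N, g ^ u * Ts u

noncomputable def Kq (g : PSR) : PSR :=
  (1 - PowerSeries.X) * (1 - g * PowerSeries.X) * (1 - g)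
    - Cr * (1 - PowerSeries.X) * (1 - g) * (g * PowerSeries.X)
    + Cr * (1 - PowerSeries.X) * (1 - g * PowerSeries.X)
    - Cw * PowerSeries.X * (1 - g * PowerSeries.X) * (1 - g)

lemma E5 (g : PSR) (N : ℕ) :
    Sg g (N + 1) = 1 + Cr * SAg g (N + 1) + Cr * STg g (N + 1)
      + Cw * (PowerSeries.X * (Js * Sg g (N + 1))) := by
  have h0 : ∑ u ∈ Finset.range (N + 1), g ^ u * (if u = 0 then (1 : PSR) else 0) = 1 := by
    rw [Finset.sum_eq_single_of_mem 0 (by simp)]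
    · simp
    · intro b _ hb; rw [if_neg hb, mul_zero]
  have h2 : Cr * SAg g (N + 1) = ∑ u ∈ Finset.range (N + 1), g ^ u * (Cr * As u) := by
    rw [SAg, Finset.mul_sum]; exact Finset.sum_congr rfl fun u _ => by ring
  have h3 : Cr * STg g (N + 1) = ∑ u ∈ Finset.range (N + 1), g ^ u * (Cr * Ts u) := by
    rw [STg, Finset.mul_sum]; exact Finset.sum_congr rfl fun u _ => by ring
  have h4 : Cw * (PowerSeries.X * (Js * Sg g (N + 1)))
      = ∑ u ∈ Finset.range (N + 1), g ^ u * (Cw * (PowerSeries.X * (Js * Fu u))) := by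
    rw [Sg, Finset.mul_sum, Finset.mul_sum, Finset.mul_sum]
    exact Finset.sum_congr rfl fun u _ => by ring
  rw [h2, h3, h4, ← h0, ← Finset.sum_add_distrib, ← Finset.sum_add_distrib,
    ← Finset.sum_add_distrib]
  exact Finset.sum_congr rfl fun u _ => by rw [← mul_add, ← mul_add, ← mul_add, ← SR u]

lemma E6 (g : PSR) (N : ℕ) :
    (1 - g * PowerSeries.X) * SAg g N = g * PowerSeries.X * Sg g N - g ^ N * As N := by
  induction N with
  | zero => simp [SAg, Sg, As]
  | succ N ih =>
    rw [SAg, Finset.sum_range_succ, ← SAg, Sg, Finset.sum_range_succ, ← Sg, As_succ]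
    linear_combination ih

lemma E7 (g : PSR) (N : ℕ) :
    (1 - g) * STg g (N + 1) = F1s - Sg g (N + 1) - g ^ (N + 1) * Ts N := by
  induction N with
  | zero =>
    rw [STg, Sg, Finset.sum_range_one, Finset.sum_range_one, pow_zero, one_mul, one_mul]
    linear_combination (-1 : PSR) * F1s_split
  | succ N ih =>
    rw [STg, Finset.sum_range_succ, ← STg, Sg, Finset.sum_range_succ, ← Sg]
    linear_combination ih - g ^ (N + 1) * Ts_succ N

lemma E9 (g : PSR) (N : ℕ) :
    Kq g * Sg g (N + 1)
      = (1 - PowerSeries.X) * (1 - g * PowerSeries.X) * (1 - g)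
          + Cr * (1 - PowerSeries.X) * (1 - g * PowerSeries.X) * F1s
        - ((Cr * (1 - PowerSeries.X) * (1 - g) * g ^ (N + 1)) * As (N + 1)
          + (Cr * (1 - PowerSeries.X) * (1 - g * PowerSeries.X) * g ^ (N + 1)) * Ts N) := by
  have e5 := E5 g N
  have e6 := E6 g (N + 1)
  have e7 := E7 g N
  have hJ := J_inv
  simp only [Kq]
  linear_combination ((1 - g * PowerSeries.X) * (1 - g) * (1 - PowerSeries.X)) * e5
    + (Cr * (1 - PowerSeries.X) * (1 - g)) * e6
    + (Cr * (1 - PowerSeries.X) * (1 - g * PowerSeries.X)) * e7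
    + (Cw * PowerSeries.X * (1 - g * PowerSeries.X) * (1 - g) * Sg g (N + 1)) * hJ

lemma coeff_mul_right_zero {b : PSR} (a : PSR) {n : ℕ}
    (h : ∀ m, m ≤ n → PowerSeries.coeff m b = 0) :
    PowerSeries.coeff n (a * b) = 0 := by
  rw [PowerSeries.coeff_mul]
  refine Finset.sum_eq_zero fun p hp => ?_
  rw [Finset.HasAntidiagonal.mem_antidiagonal] at hp
  rw [h p.2 (by omega), mul_zero]

noncomputable def Gg (g : PSR) : PSR := PowerSeries.mk fun n => PowerSeries.coeff n (Sg g (n + 1))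

lemma coeff_Sg_stable (g : PSR) {n N : ℕ} (h : n < N) :
    PowerSeries.coeff n (Sg g N) = PowerSeries.coeff n (Sg g (n + 1)) := by
  have hsub : Finset.range (n + 1) ⊆ Finset.range N := Finset.range_subset_range.mpr (by omega)
  rw [Sg, Sg, map_sum, map_sum, ← Finset.sum_subset hsub]
  intro u hu hnu
  rw [Finset.mem_range] at hu
  rw [Finset.mem_range, not_lt] at hnu
  exact coeff_mul_right_zero _ fun m hm => coeff_Fu_zero (by omega)

lemma coeff_Gg (g : PSR) (n : ℕ) :
    PowerSeries.coeff n (Gg g) = PowerSeries.coeff n (Sg g (n + 1)) := by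
  simp [Gg]

lemma hGg (g : PSR) :
    Kq g * Gg g = (1 - PowerSeries.X) * (1 - g * PowerSeries.X) * (1 - g)
      + Cr * (1 - PowerSeries.X) * (1 - g * PowerSeries.X) * F1s := by
  refine PowerSeries.ext fun n => ?_
  have hL : PowerSeries.coeff n (Kq g * Gg g)
      = PowerSeries.coeff n (Kq g * Sg g (n + 1)) := by
    have hsplit : Kq g * Gg g = Kq g * Sg g (n + 1) + Kq g * (Gg g - Sg g (n + 1)) := by ring
    have h0 : PowerSeries.coeff n (Kq g * (Gg g - Sg g (n + 1))) = 0 :=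
      coeff_mul_right_zero _ fun m hm => by
        rw [map_sub, coeff_Gg, coeff_Sg_stable g (show m < n + 1 by omega), sub_self]
    rw [hsplit, map_add, h0, add_zero]
  rw [hL, E9 g n, map_sub, map_add, map_add]
  rw [coeff_mul_right_zero _ (fun m hm => coeff_As_zero (show m < n + 1 by omega)),
    coeff_mul_right_zero _ (fun m hm => coeff_Ts_zero (show m ≤ n by omega))]
  ring

lemma Gg_zero : Gg 0 = Fu 0 := by
  refine PowerSeries.ext fun n => ?_
  rw [coeff_Gg, Sg, map_sum, Finset.sum_eq_single_of_mem 0 (by simp)]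
  · rw [pow_zero, one_mul]
  · intro b _ hb
    rw [zero_pow hb, zero_mul, map_zero]

end QueenAux

namespace QueenAux

lemma hKtau : Kq (1 + Cr * F1s) = 0 := by
  have hmul : Kq (1 + Cr * F1s) * Gg (1 + Cr * F1s) = 0 := by
    linear_combination hGg (1 + Cr * F1s)
  have hcc : PowerSeries.coeff 0 (Gg (1 + Cr * F1s)) = 1 := by
    rw [coeff_Gg, Sg, Finset.sum_range_one, pow_zero, one_mul]
    simp [Fu, f_zero_zero]
  have hne : Gg (1 + Cr * F1s) ≠ 0 := by
    intro h
    rw [h, map_zero] at hcc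
    exact zero_ne_one hcc
  rcases mul_eq_zero.mp hmul with h | h
  · exact h
  · exact absurd h hne

lemma hTau : (1 - PowerSeries.X) * (1 + Cr * F1s)
    = ((1 + Cr) * (1 - PowerSeries.X) - Cw * PowerSeries.X) * Fu 0 := by
  have h0 := hGg 0
  rw [Gg_zero] at h0
  simp only [Kq] at h0
  linear_combination -h0

lemma K0_ne : ((1 + Cr) * (1 - PowerSeries.X) - Cw * PowerSeries.X : PSR) ≠ 0 := by
  intro h
  have h1 := congrArg (PowerSeries.constantCoeff) h
  simp only [map_sub, map_add, map_mul, map_one, PowerSeries.constantCoeff_X, mul_zero,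
    sub_zero, Cr, Cw, PowerSeries.constantCoeff_C, map_zero] at h1
  have h2 := congrArg MvPolynomial.constantCoeff h1
  simp only [map_add, map_mul, map_one, MvPolynomial.constantCoeff_X, ρp, map_zero,
    mul_one, add_zero] at h2
  exact one_ne_zero h2

end QueenAux

open QueenAux in
theorem stmt17 (Pw : PowerSeries (MvPolynomial (Fin 2) ℚ))
    (hP : Pw = PowerSeries.mk pQueenW) :
    PowerSeries.X * (ρq + 1 - (ρq + ωq + 1) * PowerSeries.X) ^ 2 * Pw ^ 2 -
      (1 - PowerSeries.X) *
        (1 - (ωq - 2 * ρq) * PowerSeries.X - (ωq + 2 * ρq + 1) * PowerSeries.X ^ 2) * Pw +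
      (1 - PowerSeries.X) ^ 2 = 0 := by
  subst hP
  have hpf : PowerSeries.mk pQueenW = Fu 0 := by
    refine PowerSeries.ext fun n => ?_
    simp [Fu, pQueenW_eq_f]
  rw [hpf]
  have hρ : ρq = Cr := rfl
  have hω : ωq = Cw := rfl
  rw [hρ, hω]
  have hK := hKtau
  simp only [Kq] at hK
  have hτ := hTau
  refine mul_left_cancel₀ K0_ne ?_
  rw [mul_zero]
  linear_combination ((1 - PowerSeries.X) ^ 2) * hK
    - ((PowerSeries.X * (1 - PowerSeries.X)
          * ((1 + Cr) * (1 - PowerSeries.X) - Cw * PowerSeries.X)) * (1 + Cr * F1s)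
        + (Fu 0 * PowerSeries.X
            * ((1 + Cr) * (1 - PowerSeries.X) - Cw * PowerSeries.X) ^ 2
          + (1 - PowerSeries.X) * ((1 + PowerSeries.X)
              * (Cw * PowerSeries.X - (1 - PowerSeries.X))
            - 2 * Cr * PowerSeries.X * (1 - PowerSeries.X)))) * hτ
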